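/- Core of Theorems 1 and 2 (strongly adaptive ⇒ √(T·V) dynamic regret): Let E be a real normed vector space, D ⊆ E, T ≥ 1, G ≥ 0, R ≥ 0, and let f_1,…,f_T : E → ℝ each be G-Lipschitz on D. Let x_1,…,x_T ∈ D have uniform interval static regret at most R (i.e., for every 1 ≤ s ≤ e ≤ T and every u ∈ D, ∑_{t=s}^e (f_t(x_t) − f_t(u)) ≤ R). Then for every comparator sequence z_1,…,z_T ∈ D with path variation V = ∑_{t=2}^T ‖z_t − z_{t−1}‖, the dynamic regret satisfies ∑_{t=1}^T (f_t(x_t) − f_t(z_t)) ≤ 2·√(G·T·V·R) + R. -/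

import Mathlib

/-- Core of Theorems 1 and 2: strongly adaptive iterates (uniform interval static regret
at most `R`) with `G`-Lipschitz losses enjoy dynamic regret at most
`2 * √(G * T * V * R) + R` against any comparator sequence with path variation `V`. -/
theorem strongly_adaptive_sqrt_TV_dynamic_regret {E : Type*}
    [NormedAddCommGroup E] [NormedSpace ℝ E]
    (D : Set E) (T : ℕ) (hT : 1 ≤ T) (G R : ℝ) (hG : 0 ≤ G) (hR : 0 ≤ R)
    (f : ℕ → E → ℝ)
    (hlip : ∀ t ∈ Finset.Icc 1 T, ∀ x ∈ D, ∀ y ∈ D, |f t x - f t y| ≤ G * ‖x - y‖)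
    (x : ℕ → E) (hx : ∀ t ∈ Finset.Icc 1 T, x t ∈ D)
    (hSA : ∀ s e : ℕ, 1 ≤ s → s ≤ e → e ≤ T → ∀ u ∈ D,
      ∑ t ∈ Finset.Icc s e, (f t (x t) - f t u) ≤ R)
    (z : ℕ → E) (hz : ∀ t ∈ Finset.Icc 1 T, z t ∈ D) :
    ∑ t ∈ Finset.Icc 1 T, (f t (x t) - f t (z t)) ≤
      2 * Real.sqrt (G * T * (∑ t ∈ Finset.Icc 2 T, ‖z t - z (t - 1)‖) * R) + R := by
  set V : ℝ := ∑ t ∈ Finset.Icc 2 T, ‖z t - z (t - 1)‖ with hVdef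
  have hV : 0 ≤ V := Finset.sum_nonneg fun _ _ => norm_nonneg _
  -- telescoping bound on the comparator displacement
  have hnorm : ∀ n s : ℕ, ‖z (s + n) - z s‖ ≤ ∑ j ∈ Finset.Icc (s + 1) (s + n), ‖z j - z (j - 1)‖ := by
    intro n
    induction n with
    | zero => intro s; simp
    | succ n ih =>
      intro s
      have h1 : s + (n + 1) = (s + n) + 1 := by omega
      rw [h1, Finset.sum_Icc_succ_top (by omega)]
      have h2 : z (s + n + 1) - z s = (z (s + n + 1) - z (s + n)) + (z (s + n) - z s) := by abel
      calc ‖z (s + n + 1) - z s‖ ≤ ‖z (s + n + 1) - z (s + n)‖ + ‖z (s + n) - z s‖ := by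
            rw [h2]; exact norm_add_le _ _
        _ ≤ ‖z (s + n + 1) - z (s + n)‖ + ∑ j ∈ Finset.Icc (s + 1) (s + n), ‖z j - z (j - 1)‖ := by
            linarith [ih s]
        _ = ∑ j ∈ Finset.Icc (s + 1) (s + n), ‖z j - z (j - 1)‖ + ‖z (s + n + 1) - z (s + n + 1 - 1)‖ := by
            simp only [Nat.add_sub_cancel]; ring
  have hnorm' : ∀ s t : ℕ, s ≤ t → ‖z t - z s‖ ≤ ∑ j ∈ Finset.Icc (s + 1) t, ‖z j - z (j - 1)‖ := by
    intro s t hst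
    obtain ⟨n, rfl⟩ := Nat.exists_eq_add_of_le hst
    exact hnorm n s
  -- per-interval bound
  have hIB : ∀ s e : ℕ, 1 ≤ s → s ≤ e → e ≤ T →
      ∑ t ∈ Finset.Icc s e, (f t (x t) - f t (z t)) ≤
        R + G * ((e - s : ℕ) : ℝ) * ∑ j ∈ Finset.Icc (s + 1) e, ‖z j - z (j - 1)‖ := by
    intro s e h1s hse heT
    have hzs : z s ∈ D := hz s (by simp [Finset.mem_Icc]; omega)
    have split : ∀ t, f t (x t) - f t (z t) = (f t (x t) - f t (z s)) + (f t (z s) - f t (z t)) := by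
      intro t; ring
    have hVse : 0 ≤ ∑ j ∈ Finset.Icc (s + 1) e, ‖z j - z (j - 1)‖ :=
      Finset.sum_nonneg fun _ _ => norm_nonneg _
    calc ∑ t ∈ Finset.Icc s e, (f t (x t) - f t (z t))
        = ∑ t ∈ Finset.Icc s e, (f t (x t) - f t (z s))
          + ∑ t ∈ Finset.Icc s e, (f t (z s) - f t (z t)) := by
          rw [← Finset.sum_add_distrib]; exact Finset.sum_congr rfl fun t _ => split t
      _ ≤ R + G * ((e - s : ℕ) : ℝ) * ∑ j ∈ Finset.Icc (s + 1) e, ‖z j - z (j - 1)‖ := by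
          gcongr ?_ + ?_
          · exact hSA s e h1s hse heT (z s) hzs
          · -- second sum: Lipschitz + telescoping
            have hterm : ∀ t ∈ Finset.Icc s e, f t (z s) - f t (z t) ≤
                G * ∑ j ∈ Finset.Icc (s + 1) e, ‖z j - z (j - 1)‖ := by
              intro t ht
              rw [Finset.mem_Icc] at ht
              have htD : z t ∈ D := hz t (by simp [Finset.mem_Icc]; omega)
              have h1 : f t (z s) - f t (z t) ≤ |f t (z s) - f t (z t)| := le_abs_self _
              have h2 := hlip t (by simp [Finset.mem_Icc]; omega) (z s) hzs (z t) htD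
              have h3 : ‖z s - z t‖ = ‖z t - z s‖ := norm_sub_rev _ _
              have h4 := hnorm' s t ht.1
              have h5 : ∑ j ∈ Finset.Icc (s + 1) t, ‖z j - z (j - 1)‖ ≤
                  ∑ j ∈ Finset.Icc (s + 1) e, ‖z j - z (j - 1)‖ := by
                apply Finset.sum_le_sum_of_subset_of_nonneg
                · apply Finset.Icc_subset_Icc_right ht.2
                · intro _ _ _; exact norm_nonneg _
              calc f t (z s) - f t (z t) ≤ G * ‖z s - z t‖ := h1.trans h2
                _ = G * ‖z t - z s‖ := by rw [h3]
                _ ≤ G * ∑ j ∈ Finset.Icc (s + 1) e, ‖z j - z (j - 1)‖ := by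
                    apply mul_le_mul_of_nonneg_left (h4.trans h5) hG
            -- the t = s term is ≤ too, but we want the factor (e - s)
            have hzero : f s (z s) - f s (z s) = 0 := by ring
            have hins : Finset.Icc s e = insert s (Finset.Icc (s + 1) e) := by
              ext a; simp [Finset.mem_Icc, Finset.mem_insert]; omega
            rw [hins, Finset.sum_insert (by simp [Finset.mem_Icc])]
            rw [hzero, zero_add]
            calc ∑ t ∈ Finset.Icc (s + 1) e, (f t (z s) - f t (z t))
                ≤ ∑ t ∈ Finset.Icc (s + 1) e,
                    (G * ∑ j ∈ Finset.Icc (s + 1) e, ‖z j - z (j - 1)‖) := by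
                  apply Finset.sum_le_sum
                  intro t ht
                  exact hterm t (Finset.mem_of_subset (by
                    apply Finset.Icc_subset_Icc_left; omega) ht)
              _ = ((e - s : ℕ) : ℝ) * (G * ∑ j ∈ Finset.Icc (s + 1) e, ‖z j - z (j - 1)‖) := by
                  rw [Finset.sum_const, Nat.card_Icc, nsmul_eq_mul]
                  congr 2
                  omega
              _ = G * ((e - s : ℕ) : ℝ) * ∑ j ∈ Finset.Icc (s + 1) e, ‖z j - z (j - 1)‖ := by ring
  -- main partition induction
  have Q : ∀ L : ℕ, 1 ≤ L → ∀ k : ℕ, ∀ s : ℕ, 1 ≤ s → T + 1 ≤ s + k * L →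
      ∑ t ∈ Finset.Icc s T, (f t (x t) - f t (z t)) ≤
        (k : ℝ) * R + G * ((L : ℝ) - 1) * ∑ j ∈ Finset.Icc (s + 1) T, ‖z j - z (j - 1)‖ := by
    intro L hL k
    induction k with
    | zero =>
      intro s h1s hcov
      have : Finset.Icc s T = ∅ := by
        rw [Finset.Icc_eq_empty_iff]; omega
      rw [this]
      have : Finset.Icc (s + 1) T = ∅ := by
        rw [Finset.Icc_eq_empty_iff]; omega
      rw [this]
      simp
    | succ k ih =>
      intro s h1s hcov
      by_cases hsT : T < s
      · have h1 : Finset.Icc s T = ∅ := by rw [Finset.Icc_eq_empty_iff]; omega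
        have h2 : Finset.Icc (s + 1) T = ∅ := by rw [Finset.Icc_eq_empty_iff]; omega
        rw [h1, h2]
        simp only [Finset.sum_empty, mul_zero, add_zero]
        positivity
      push_neg at hsT
      set m : ℕ := min (s + L - 1) T with hmdef
      have hsm : s ≤ m := by omega
      have hmT : m ≤ T := by omega
      have hms : (m - s : ℕ) ≤ L - 1 := by omega
      -- split the interval
      have hsplit : Finset.Icc s T = Finset.Icc s m ∪ Finset.Icc (m + 1) T := by
        ext a; simp [Finset.mem_Icc, Finset.mem_union]; omega
      have hdisj : Disjoint (Finset.Icc s m) (Finset.Icc (m + 1) T) := by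
        rw [Finset.disjoint_left]
        intro a ha hb
        rw [Finset.mem_Icc] at ha hb
        omega
      rw [hsplit, Finset.sum_union hdisj]
      have hfirst := hIB s m h1s hsm hmT
      have hrest : ∑ t ∈ Finset.Icc (m + 1) T, (f t (x t) - f t (z t)) ≤
          (k : ℝ) * R + G * ((L : ℝ) - 1) * ∑ j ∈ Finset.Icc (m + 2) T, ‖z j - z (j - 1)‖ := by
        apply ih (m + 1) (by omega)
        have hkl : (k + 1) * L = k * L + L := by ring
        omega
      have hVsplit : ∑ j ∈ Finset.Icc (s + 1) m, ‖z j - z (j - 1)‖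
          + ∑ j ∈ Finset.Icc (m + 2) T, ‖z j - z (j - 1)‖
          ≤ ∑ j ∈ Finset.Icc (s + 1) T, ‖z j - z (j - 1)‖ := by
        have hd : Disjoint (Finset.Icc (s + 1) m) (Finset.Icc (m + 2) T) := by
          rw [Finset.disjoint_left]
          intro a ha hb
          rw [Finset.mem_Icc] at ha hb
          omega
        rw [← Finset.sum_union hd]
        apply Finset.sum_le_sum_of_subset_of_nonneg
        · intro a ha
          simp only [Finset.mem_union, Finset.mem_Icc] at ha ⊢
          omega
        · intro _ _ _; exact norm_nonneg _
      have hms' : ((m - s : ℕ) : ℝ) ≤ (L : ℝ) - 1 := by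
        have : ((m - s : ℕ) : ℝ) ≤ ((L - 1 : ℕ) : ℝ) := Nat.cast_le.mpr hms
        have hL' : ((L - 1 : ℕ) : ℝ) = (L : ℝ) - 1 := by
          push_cast [Nat.cast_sub hL]; ring
        linarith
      have hVsm : 0 ≤ ∑ j ∈ Finset.Icc (s + 1) m, ‖z j - z (j - 1)‖ :=
        Finset.sum_nonneg fun _ _ => norm_nonneg _
      have hfirst' : ∑ t ∈ Finset.Icc s m, (f t (x t) - f t (z t)) ≤
          R + G * ((L : ℝ) - 1) * ∑ j ∈ Finset.Icc (s + 1) m, ‖z j - z (j - 1)‖ := by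
        refine hfirst.trans ?_
        have := mul_le_mul_of_nonneg_right (mul_le_mul_of_nonneg_left hms' hG) hVsm
        linarith
      have hGL1 : 0 ≤ G * ((L : ℝ) - 1) := by
        apply mul_nonneg hG
        have : (1 : ℝ) ≤ (L : ℝ) := by exact_mod_cast hL
        linarith
      push_cast
      nlinarith [mul_le_mul_of_nonneg_left hVsplit hGL1]
  -- final assembly
  by_cases hcase : G * (T : ℝ) * V ≤ R
  · -- one interval suffices
    have h1 := Q T hT 1 1 le_rfl (by omega)
    push_cast at h1
    have hGTV : 0 ≤ G * (T : ℝ) * V := by positivity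
    have hsq : G * (T : ℝ) * V ≤ Real.sqrt (G * (T : ℝ) * V * R) := by
      rw [Real.le_sqrt hGTV (by positivity)]
      nlinarith
    have hVs : ∑ j ∈ Finset.Icc (1 + 1) T, ‖z j - z (j - 1)‖ = V := by norm_num [hVdef]
    rw [hVs] at h1
    have hbd : G * ((T : ℝ) - 1) * V ≤ G * (T : ℝ) * V := by nlinarith
    have hs0 : 0 ≤ Real.sqrt (G * (T : ℝ) * V * R) := Real.sqrt_nonneg _
    linarith
  · push_neg at hcase
    by_cases hR0 : R = 0
    · -- use singleton intervals
      have h1 := Q 1 le_rfl T 1 le_rfl (by omega)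
      have hVs : ∑ j ∈ Finset.Icc (1 + 1) T, ‖z j - z (j - 1)‖ = V := by norm_num [hVdef]
      rw [hVs] at h1
      have hz0 : (T : ℝ) * R + G * ((1 : ℕ) - 1 : ℝ) * V = 0 := by rw [hR0]; norm_num
      have hs0 : 0 ≤ Real.sqrt (G * (T : ℝ) * V * R) := Real.sqrt_nonneg _
      linarith
    · have hRpos : 0 < R := lt_of_le_of_ne hR (Ne.symm hR0)
      have hGV : 0 < G * V := by
        by_contra h
        push_neg at h
        have : G * (T : ℝ) * V ≤ 0 := by
          have hT0 : (0:ℝ) ≤ (T : ℝ) := Nat.cast_nonneg _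
          nlinarith
        linarith
      set xr : ℝ := Real.sqrt ((T : ℝ) * R / (G * V)) with hxr
      have hxrpos : 0 < xr := by
        apply Real.sqrt_pos.mpr
        apply div_pos _ hGV
        have : (0:ℝ) < (T:ℝ) := by exact_mod_cast hT
        positivity
      set L : ℕ := ⌈xr⌉₊ with hLdef
      have hLpos : 1 ≤ L := Nat.one_le_iff_ne_zero.mpr (by
        simp only [hLdef, ne_eq, Nat.ceil_eq_zero, not_le]
        exact hxrpos)
      set k : ℕ := T / L + 1 with hkdef
      have hcov : T + 1 ≤ 1 + k * L := by
        have h : k * L = L * (T / L) + L := by rw [hkdef]; ring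
        have h2 := Nat.div_add_mod T L
        have h3 := Nat.mod_lt T (show 0 < L by omega)
        omega
      have hmain := Q L hLpos k 1 le_rfl hcov
      have hVs : ∑ j ∈ Finset.Icc (1 + 1) T, ‖z j - z (j - 1)‖ = V := by norm_num [hVdef]
      rw [hVs] at hmain
      -- numeric bounds
      have hxL : xr ≤ (L : ℝ) := Nat.le_ceil xr
      have hLx : (L : ℝ) - 1 ≤ xr := by
        have := Nat.ceil_lt_add_one hxrpos.le
        simp only [hLdef]
        linarith
      have hk : (k : ℝ) ≤ (T : ℝ) / (L : ℝ) + 1 := by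
        have : ((T / L : ℕ) : ℝ) ≤ (T : ℝ) / (L : ℝ) := Nat.cast_div_le
        push_cast [hkdef]
        linarith
      set a : ℝ := Real.sqrt (G * V) with hadef
      set b : ℝ := Real.sqrt ((T : ℝ) * R) with hbdef
      have hTRpos : 0 < (T : ℝ) * R := by
        have : (0:ℝ) < (T:ℝ) := by exact_mod_cast hT
        positivity
      have hapos : 0 < a := Real.sqrt_pos.mpr hGV
      have hbpos : 0 < b := Real.sqrt_pos.mpr hTRpos
      have hxab : xr = b / a := by
        rw [hxr, hadef, hbdef, Real.sqrt_div hTRpos.le]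
      have ha2 : a ^ 2 = G * V := Real.sq_sqrt hGV.le
      have hb2 : b ^ 2 = (T : ℝ) * R := Real.sq_sqrt hTRpos.le
      have hab : a * b = Real.sqrt (G * (T : ℝ) * V * R) := by
        rw [hadef, hbdef, ← Real.sqrt_mul hGV.le]
        congr 1
        ring
      -- bound G * (L - 1) * V ≤ a * b
      have hane : a ≠ 0 := ne_of_gt hapos
      have hbne : b ≠ 0 := ne_of_gt hbpos
      have hb1 : G * ((L : ℝ) - 1) * V ≤ a * b := by
        have h1 : G * ((L : ℝ) - 1) * V ≤ G * xr * V :=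
          mul_le_mul_of_nonneg_right (mul_le_mul_of_nonneg_left hLx hG) hV
        have h2 : G * xr * V = a * b := by
          rw [hxab]
          field_simp
          linear_combination (-1 : ℝ) * ha2
        linarith
      -- bound k * R ≤ a * b + R
      have hb2' : (k : ℝ) * R ≤ a * b + R := by
        have h1 : (k : ℝ) * R ≤ ((T : ℝ) / (L : ℝ) + 1) * R := by
          apply mul_le_mul_of_nonneg_right hk hR
        have hLRpos : (0:ℝ) < (L : ℝ) := by exact_mod_cast hLpos
        have h2 : (T : ℝ) / (L : ℝ) ≤ (T : ℝ) / xr := by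
          exact div_le_div_of_nonneg_left (Nat.cast_nonneg T) hxrpos hxL
        have h3 : (T : ℝ) / xr * R = a * b := by
          rw [hxab]
          field_simp
          linear_combination (-1 : ℝ) * hb2
        have h4 : ((T : ℝ) / (L : ℝ)) * R ≤ ((T : ℝ) / xr) * R :=
          mul_le_mul_of_nonneg_right h2 hR
        have hdist : ((T : ℝ) / (L : ℝ) + 1) * R = (T : ℝ) / (L : ℝ) * R + R := by ring
        linarith
      rw [← hab]
      linarith
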